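/- Let (H, β) be a finite dimensional Hom-Hopf algebra with β bijective, M a linear space and ζ_M : M → M bijective. Then left (H^{*op} ⊗ H^*)-module structures on (M, ζ_M) are in bijection with pairs of a left H-comodule structure ρ^l and a right H-comodule structure ρ^r on (M, ζ_M) satisfying the bicomodule condition β(m_{[-1]}) ⊗ ρ^r(m_{[0]}) = ρ^l(m_{(0)}) ⊗ β(m_{(1)}); the module structure is recovered as (x ⊗ y)·m = ⟨x, m_{[-1]}⟩⟨y, β^{-1}(m_{[0](1)})⟩ζ_M^{-1}(m_{[0](0)}). -/

import Mathlib

open TensorProduct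

namespace HomHopf

variable (k : Type) [Field k]

/-- A Hom-algebra. -/
structure HomAlg (A : Type) [AddCommGroup A] [Module k A] : Type where
  mul : A →ₗ[k] A →ₗ[k] A
  one : A
  zmap : A →ₗ[k] A
  zmap_mul : ∀ a b, zmap (mul a b) = mul (zmap a) (zmap b)
  hom_assoc : ∀ a b c, mul (zmap a) (mul b c) = mul (mul a b) (zmap c)
  zmap_one : zmap one = one
  one_mul : ∀ a, mul one a = zmap a
  mul_one : ∀ a, mul a one = zmap a

/-- A Hom-bialgebra. -/
structure Bialg (H : Type) [AddCommGroup H] [Module k H] : Type where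
  mul : H →ₗ[k] H →ₗ[k] H
  one : H
  comul : H →ₗ[k] H ⊗[k] H
  counit : H →ₗ[k] k
  bmap : H →ₗ[k] H
  bmap_mul : ∀ a b, bmap (mul a b) = mul (bmap a) (bmap b)
  hom_assoc : ∀ a b c, mul (bmap a) (mul b c) = mul (mul a b) (bmap c)
  bmap_one : bmap one = one
  one_mul : ∀ a, mul one a = bmap a
  mul_one : ∀ a, mul a one = bmap a
  comul_bmap : ∀ c, comul (bmap c) = TensorProduct.map bmap bmap (comul c)
  coassoc : ∀ c, TensorProduct.map bmap comul (comul c)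
      = TensorProduct.assoc k H H H (TensorProduct.map comul bmap (comul c))
  counit_bmap : ∀ c, counit (bmap c) = counit c
  counit_comul : ∀ c,
      TensorProduct.lid k H (TensorProduct.map counit LinearMap.id (comul c)) = bmap c
  comul_counit : ∀ c,
      TensorProduct.rid k H (TensorProduct.map LinearMap.id counit (comul c)) = bmap c
  comul_mul : ∀ a b, comul (mul a b) = TensorProduct.map₂ mul mul (comul a) (comul b)
  comul_one : comul one = one ⊗ₜ[k] one
  counit_mul : ∀ a b, counit (mul a b) = counit a * counit b
  counit_one : counit one = 1

/-- A Hom-Hopf algebra. -/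
structure Hopf (H : Type) [AddCommGroup H] [Module k H] extends Bialg k H where
  S : H →ₗ[k] H
  S_mul_id : ∀ h,
      TensorProduct.lift mul (TensorProduct.map S LinearMap.id (comul h)) = counit h • one
  id_mul_S : ∀ h,
      TensorProduct.lift mul (TensorProduct.map LinearMap.id S (comul h)) = counit h • one
  S_bmap : ∀ h, S (bmap h) = bmap (S h)

variable {H : Type} [AddCommGroup H] [Module k H]
variable {M N P V W U : Type}
  [AddCommGroup M] [Module k M] [AddCommGroup N] [Module k N]
  [AddCommGroup P] [Module k P] [AddCommGroup V] [Module k V]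
  [AddCommGroup W] [Module k W] [AddCommGroup U] [Module k U]

/-- Left Hom-module. -/
structure IsLMod (A : Bialg k H) (ζ : M →ₗ[k] M) (act : H →ₗ[k] M →ₗ[k] M) : Prop where
  assoc : ∀ a b m, act (A.bmap a) (act b m) = act (A.mul a b) (ζ m)
  zeta_act : ∀ a m, ζ (act a m) = act (A.bmap a) (ζ m)
  one_act : ∀ m, act A.one m = ζ m

/-- Right Hom-module. -/
structure IsRMod (A : Bialg k H) (ζ : M →ₗ[k] M) (ract : M →ₗ[k] H →ₗ[k] M) : Prop where
  assoc : ∀ m a b, ract (ract m a) (A.bmap b) = ract (ζ m) (A.mul a b)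
  zeta_act : ∀ m a, ζ (ract m a) = ract (ζ m) (A.bmap a)
  act_one : ∀ m, ract m A.one = ζ m

/-- Left Hom-module over a plain Hom-algebra structure (given by raw data). -/
structure IsLModOf {A : Type} [AddCommGroup A] [Module k A]
    (mul : A →ₗ[k] A →ₗ[k] A) (one : A) (zmap : A →ₗ[k] A)
    (ζ : M →ₗ[k] M) (act : A →ₗ[k] M →ₗ[k] M) : Prop where
  assoc : ∀ a b m, act (zmap a) (act b m) = act (mul a b) (ζ m)
  zeta_act : ∀ a m, ζ (act a m) = act (zmap a) (ζ m)
  one_act : ∀ m, act one m = ζ m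

/-- Right Hom-module over a plain Hom-algebra structure. -/
structure IsRModOf {A : Type} [AddCommGroup A] [Module k A]
    (mul : A →ₗ[k] A →ₗ[k] A) (one : A) (zmap : A →ₗ[k] A)
    (ζ : M →ₗ[k] M) (ract : M →ₗ[k] A →ₗ[k] M) : Prop where
  assoc : ∀ m a b, ract (ract m a) (zmap b) = ract (ζ m) (mul a b)
  zeta_act : ∀ m a, ζ (ract m a) = ract (ζ m) (zmap a)
  act_one : ∀ m, ract m one = ζ m

/-- Left Hom-comodule. -/
structure IsLCom (A : Bialg k H) (ζ : M →ₗ[k] M) (ρ : M →ₗ[k] H ⊗[k] M) : Prop where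
  coact_zeta : ∀ m, ρ (ζ m) = TensorProduct.map A.bmap ζ (ρ m)
  counit_coact : ∀ m, TensorProduct.lid k M (TensorProduct.map A.counit LinearMap.id (ρ m)) = ζ m
  coassoc : ∀ m, TensorProduct.map A.bmap ρ (ρ m)
      = TensorProduct.assoc k H H M (TensorProduct.map A.comul ζ (ρ m))

/-- Right Hom-comodule. -/
structure IsRCom (A : Bialg k H) (ζ : M →ₗ[k] M) (ρ : M →ₗ[k] M ⊗[k] H) : Prop where
  coact_zeta : ∀ m, ρ (ζ m) = TensorProduct.map ζ A.bmap (ρ m)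
  coact_counit : ∀ m, TensorProduct.rid k M (TensorProduct.map LinearMap.id A.counit (ρ m)) = ζ m
  coassoc : ∀ m, TensorProduct.map ρ A.bmap (ρ m)
      = (TensorProduct.assoc k M H H).symm (TensorProduct.map ζ A.comul (ρ m))

/-- `(h·m)_{[-1]} ⊗ (h·m)_{[0]} = h_1 m_{[-1]} ⊗ h_2 · m_{[0]}`. -/
def LLcompat (A : Bialg k H) (act : H →ₗ[k] M →ₗ[k] M) (ρ : M →ₗ[k] H ⊗[k] M) : Prop :=
  ∀ h m, ρ (act h m) = TensorProduct.map₂ A.mul act (A.comul h) (ρ m)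

/-- `(h·m)_{(0)} ⊗ (h·m)_{(1)} = h_1 · m_{(0)} ⊗ h_2 m_{(1)}`. -/
def LRcompat (A : Bialg k H) (act : H →ₗ[k] M →ₗ[k] M) (ρ : M →ₗ[k] M ⊗[k] H) : Prop :=
  ∀ h m, ρ (act h m) = TensorProduct.map₂ act A.mul (A.comul h) (ρ m)

/-- `(m·h)_{[-1]} ⊗ (m·h)_{[0]} = m_{[-1]} h_1 ⊗ m_{[0]} · h_2`. -/
def RLcompat (A : Bialg k H) (ract : M →ₗ[k] H →ₗ[k] M) (ρ : M →ₗ[k] H ⊗[k] M) : Prop :=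
  ∀ m h, ρ (ract m h) = TensorProduct.map₂ A.mul ract (ρ m) (A.comul h)

/-- `(m·h)_{(0)} ⊗ (m·h)_{(1)} = m_{(0)} · h_1 ⊗ m_{(1)} h_2`. -/
def RRcompat (A : Bialg k H) (ract : M →ₗ[k] H →ₗ[k] M) (ρ : M →ₗ[k] M ⊗[k] H) : Prop :=
  ∀ m h, ρ (ract m h) = TensorProduct.map₂ ract A.mul (ρ m) (A.comul h)

/-- Four-angle H-Hopf module. -/
structure IsFourAngle (A : Hopf k H) (ζ : M →ₗ[k] M)
    (lact : H →ₗ[k] M →ₗ[k] M) (ract : M →ₗ[k] H →ₗ[k] M)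
    (ρl : M →ₗ[k] H ⊗[k] M) (ρr : M →ₗ[k] M ⊗[k] H) : Prop where
  lmod : IsLMod k A.toBialg ζ lact
  rmod : IsRMod k A.toBialg ζ ract
  bimod : ∀ a m b, lact (A.bmap a) (ract m b) = ract (lact a m) (A.bmap b)
  lcom : IsLCom k A.toBialg ζ ρl
  rcom : IsRCom k A.toBialg ζ ρr
  bicom : ∀ m, TensorProduct.map A.bmap ρr (ρl m)
      = TensorProduct.assoc k H M H (TensorProduct.map ρl A.bmap (ρr m))
  cll : LLcompat k A.toBialg lact ρl
  clr : LRcompat k A.toBialg lact ρr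
  crl : RLcompat k A.toBialg ract ρl
  crr : RRcompat k A.toBialg ract ρr

/-- Yetter–Drinfel'd compatibility, stated via arbitrary finite representations of `Δ(h)`. -/
def ydCompat (A : Bialg k H) (ract : V →ₗ[k] H →ₗ[k] V) (ρ : V →ₗ[k] V ⊗[k] H) : Prop :=
  ∀ (v : V) (h : H) (ι : Type) (s : Finset ι) (h1 h2 : ι → H),
    A.comul h = ∑ i ∈ s, h1 i ⊗ₜ[k] h2 i →
    ∑ i ∈ s, TensorProduct.map LinearMap.id (A.mul (A.bmap (A.bmap (h1 i))))
        (ρ (ract v (h2 i)))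
      = ∑ i ∈ s, TensorProduct.map (ract.flip (A.bmap (h1 i)))
          (((A.mul.flip (A.bmap (A.bmap (h2 i)))).comp A.bmap)) (ρ v)

/-- Right-right Yetter–Drinfel'd module. -/
structure IsYD (A : Hopf k H) (ζ : V →ₗ[k] V)
    (ract : V →ₗ[k] H →ₗ[k] V) (ρ : V →ₗ[k] V ⊗[k] H) : Prop where
  rmod : IsRMod k A.toBialg ζ ract
  rcom : IsRCom k A.toBialg ζ ρ
  compat : ydCompat k A.toBialg ract ρ

/-- The braiding `c_{V,W}(v ⊗ w) = ζ_W⁻¹(w_(0)) ⊗ ζ_V⁻¹(v) ◁ β⁻²(w_(1))`. -/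
noncomputable def braid (ract : V →ₗ[k] H →ₗ[k] V) (ζVinv : V →ₗ[k] V)
    (ρ : W →ₗ[k] W ⊗[k] H) (ζWinv : W →ₗ[k] W) (βinv : H →ₗ[k] H) :
    V ⊗[k] W →ₗ[k] W ⊗[k] V :=
  (TensorProduct.map LinearMap.id (TensorProduct.lift (ract.comp ζVinv))).comp
    ((TensorProduct.leftComm k V W H).toLinearMap.comp
      (TensorProduct.map LinearMap.id ((TensorProduct.map ζWinv (βinv.comp βinv)).comp ρ)))

/-- The action on the tensor product of two YD modules:
`(v ⊗ w) ◁ h = v ◁ β⁻¹(h_1) ⊗ w ◁ β⁻¹(h_2)`. -/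
noncomputable def ydAct (A : Bialg k H) (βinv : H →ₗ[k] H)
    (ractV : V →ₗ[k] H →ₗ[k] V) (ractW : W →ₗ[k] H →ₗ[k] W) :
    V ⊗[k] W →ₗ[k] H →ₗ[k] V ⊗[k] W :=
  (TensorProduct.map₂ ractV ractW).compl₂ ((TensorProduct.map βinv βinv).comp A.comul)

/-- The coaction on the tensor product of two YD modules:
`ρ(v ⊗ w) = v_(0) ⊗ w_(0) ⊗ β⁻¹(v_(1) w_(1))`. -/
noncomputable def ydCoact (A : Bialg k H) (βinv : H →ₗ[k] H)
    (ρV : V →ₗ[k] V ⊗[k] H) (ρW : W →ₗ[k] W ⊗[k] H) :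
    V ⊗[k] W →ₗ[k] (V ⊗[k] W) ⊗[k] H :=
  (TensorProduct.map LinearMap.id (βinv.comp (TensorProduct.lift A.mul))).comp
    ((TensorProduct.tensorTensorTensorComm k V H W H).toLinearMap.comp
      (TensorProduct.map ρV ρW))


/-- The multiplication of the dual Hom-Hopf algebra `H^*`:
`(x • y)(h) = x(β⁻²(h_1)) y(β⁻²(h_2))`. -/
noncomputable def dualMul (A : Hopf k H) (βinv : H →ₗ[k] H) :
    Module.Dual k H →ₗ[k] Module.Dual k H →ₗ[k] Module.Dual k H :=
  TensorProduct.curry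
    ((((TensorProduct.map (βinv.comp βinv) (βinv.comp βinv)).comp A.comul).dualMap).comp
      (TensorProduct.dualDistrib k H H))

/-- The recovery formula
`(x ⊗ y)·m = ⟨x, m_{[-1]}⟩ ⟨y, β⁻¹(m_{[0](1)})⟩ ζ_M⁻¹(m_{[0](0)})`. -/
noncomputable def dualActCond (βinv : H →ₗ[k] H) (ζMinv : M →ₗ[k] M)
    (act : (Module.Dual k H) ⊗[k] (Module.Dual k H) →ₗ[k] M →ₗ[k] M)
    (ρl : M →ₗ[k] H ⊗[k] M) (ρr : M →ₗ[k] M ⊗[k] H) : Prop :=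
  ∀ (x y : Module.Dual k H) (m : M),
    act (x ⊗ₜ[k] y) m
      = TensorProduct.rid k M
          (TensorProduct.map LinearMap.id (TensorProduct.dualDistrib k H H (x ⊗ₜ[k] y))
            (TensorProduct.leftComm k H M H
              (TensorProduct.map LinearMap.id (TensorProduct.map ζMinv βinv)
                (TensorProduct.map LinearMap.id ρr (ρl m)))))


/-! ### Auxiliary machinery -/

section Aux

variable {k}

section Contr

variable {A B X Y : Type} [AddCommGroup A] [Module k A] [AddCommGroup B] [Module k B]
  [AddCommGroup X] [Module k X] [AddCommGroup Y] [Module k Y]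

/-- left contraction `a ⊗ v ↦ x a • v`. -/
noncomputable def lcontr (x : Module.Dual k A) : A ⊗[k] X →ₗ[k] X :=
  TensorProduct.lift ((LinearMap.lsmul k X).comp x)

@[simp] lemma lcontr_tmul (x : Module.Dual k A) (a : A) (v : X) :
    lcontr x (a ⊗ₜ[k] v) = x a • v := rfl

/-- right contraction `v ⊗ a ↦ x a • v`. -/
noncomputable def rcontr (x : Module.Dual k A) : X ⊗[k] A →ₗ[k] X :=
  TensorProduct.lift ((LinearMap.lsmul k X).comp x).flip

@[simp] lemma rcontr_tmul (x : Module.Dual k A) (a : A) (v : X) :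
    rcontr x (v ⊗ₜ[k] a) = x a • v := rfl

lemma lcontr_add (x x' : Module.Dual k A) :
    (lcontr (x + x') : A ⊗[k] X →ₗ[k] X) = lcontr x + lcontr x' := by
  apply TensorProduct.ext'; intro a v; simp [add_smul]

lemma lcontr_smul (c : k) (x : Module.Dual k A) :
    (lcontr (c • x) : A ⊗[k] X →ₗ[k] X) = c • lcontr x := by
  apply TensorProduct.ext'; intro a v; simp [smul_smul]

lemma rcontr_add (x x' : Module.Dual k A) :
    (rcontr (x + x') : X ⊗[k] A →ₗ[k] X) = rcontr x + rcontr x' := by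
  apply TensorProduct.ext'; intro a v; simp [add_smul]

lemma rcontr_smul (c : k) (x : Module.Dual k A) :
    (rcontr (c • x) : X ⊗[k] A →ₗ[k] X) = c • rcontr x := by
  apply TensorProduct.ext'; intro a v; simp [smul_smul]

lemma lcontr_map (x : Module.Dual k A) (f : B →ₗ[k] A) (g : X →ₗ[k] Y) (t : B ⊗[k] X) :
    lcontr x (TensorProduct.map f g t) = g (lcontr (x ∘ₗ f) t) := by
  induction t using TensorProduct.induction_on with
  | zero => simp
  | tmul b v => simp
  | add t₁ t₂ h₁ h₂ => simp [h₁, h₂]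

lemma rcontr_map (x : Module.Dual k A) (g : X →ₗ[k] Y) (f : B →ₗ[k] A) (t : X ⊗[k] B) :
    rcontr x (TensorProduct.map g f t) = g (rcontr (x ∘ₗ f) t) := by
  induction t using TensorProduct.induction_on with
  | zero => simp
  | tmul v b => simp
  | add t₁ t₂ h₁ h₂ => simp [h₁, h₂]

lemma map_map {X' Y' X'' Y'' : Type} [AddCommGroup X'] [Module k X'] [AddCommGroup Y']
    [Module k Y'] [AddCommGroup X''] [Module k X''] [AddCommGroup Y''] [Module k Y'']
    (f : X' →ₗ[k] X'') (g : Y' →ₗ[k] Y'') (f' : X →ₗ[k] X') (g' : Y →ₗ[k] Y') (t : X ⊗[k] Y) :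
    TensorProduct.map f g (TensorProduct.map f' g' t)
      = TensorProduct.map (f ∘ₗ f') (g ∘ₗ g') t := by
  induction t using TensorProduct.induction_on with
  | zero => simp
  | tmul v b => simp
  | add t₁ t₂ h₁ h₂ => simp [h₁, h₂]

lemma lcontr_assoc (x : Module.Dual k A) (t : (A ⊗[k] X) ⊗[k] Y) :
    lcontr x (TensorProduct.assoc k A X Y t)
      = TensorProduct.map (lcontr x) LinearMap.id t := by
  induction t using TensorProduct.induction_on with
  | zero => simp
  | tmul v b =>
      induction v using TensorProduct.induction_on with
      | zero => simp
      | tmul a u => simp [smul_tmul']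
      | add s₁ s₂ g₁ g₂ => simp [add_tmul, g₁, g₂]
  | add t₁ t₂ h₁ h₂ => simp [h₁, h₂]

lemma rcontr_assoc_symm (x : Module.Dual k A) (t : X ⊗[k] (Y ⊗[k] A)) :
    rcontr x ((TensorProduct.assoc k X Y A).symm t)
      = TensorProduct.map LinearMap.id (rcontr x) t := by
  induction t using TensorProduct.induction_on with
  | zero => simp
  | tmul v b =>
      induction b using TensorProduct.induction_on with
      | zero => simp
      | tmul u a => simp [smul_tmul]
      | add s₁ s₂ g₁ g₂ => simp [tmul_add, g₁, g₂]
  | add t₁ t₂ h₁ h₂ => simp [h₁, h₂]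

lemma lid_eq_lcontr (x : Module.Dual k A) (t : A ⊗[k] X) :
    TensorProduct.lid k X (TensorProduct.map x LinearMap.id t) = lcontr x t := by
  induction t using TensorProduct.induction_on with
  | zero => simp
  | tmul a v => simp
  | add t₁ t₂ h₁ h₂ => simp [h₁, h₂]

lemma rid_eq_rcontr (x : Module.Dual k A) (t : X ⊗[k] A) :
    TensorProduct.rid k X (TensorProduct.map LinearMap.id x t) = rcontr x t := by
  induction t using TensorProduct.induction_on with
  | zero => simp
  | tmul v a => simp
  | add t₁ t₂ h₁ h₂ => simp [h₁, h₂]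

lemma apply_lcontr (x : Module.Dual k A) (g : Module.Dual k B) (t : A ⊗[k] B) :
    g (lcontr x t) = TensorProduct.dualDistrib k A B (x ⊗ₜ g) t := by
  induction t using TensorProduct.induction_on with
  | zero => simp
  | tmul a b => simp [mul_comm]
  | add t₁ t₂ h₁ h₂ => simp [h₁, h₂]

lemma apply_rcontr (y : Module.Dual k B) (g : Module.Dual k A) (t : A ⊗[k] B) :
    g (rcontr y t) = TensorProduct.dualDistrib k A B (g ⊗ₜ y) t := by
  induction t using TensorProduct.induction_on with
  | zero => simp
  | tmul a b => simp [mul_comm]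
  | add t₁ t₂ h₁ h₂ => simp [h₁, h₂]

lemma dualDistrib_map (x : Module.Dual k A) (y : Module.Dual k B)
    {A' B' : Type} [AddCommGroup A'] [Module k A'] [AddCommGroup B'] [Module k B']
    (f : A' →ₗ[k] A) (g : B' →ₗ[k] B) (t : A' ⊗[k] B') :
    TensorProduct.dualDistrib k A B (x ⊗ₜ y) (TensorProduct.map f g t)
      = TensorProduct.dualDistrib k A' B' ((x ∘ₗ f) ⊗ₜ (y ∘ₗ g)) t := by
  induction t using TensorProduct.induction_on with
  | zero => simp
  | tmul a b => simp
  | add t₁ t₂ h₁ h₂ => simp [h₁, h₂]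

variable [FiniteDimensional k A]

lemma lexpand (b : Module.Basis (Module.Free.ChooseBasisIndex k A) k A) (t : A ⊗[k] X) :
    ∑ i, b i ⊗ₜ[k] lcontr (b.coord i) t = t := by
  induction t using TensorProduct.induction_on with
  | zero => simp
  | tmul a v =>
      simp only [lcontr_tmul, tmul_smul, smul_tmul', ← TensorProduct.sum_tmul]
      congr 1
      simp [Module.Basis.coord_apply, Module.Basis.sum_repr]
  | add t₁ t₂ h₁ h₂ => simp [tmul_add, Finset.sum_add_distrib, h₁, h₂]

lemma rexpand (b : Module.Basis (Module.Free.ChooseBasisIndex k A) k A) (t : X ⊗[k] A) :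
    ∑ i, rcontr (b.coord i) t ⊗ₜ[k] b i = t := by
  induction t using TensorProduct.induction_on with
  | zero => simp
  | tmul v a =>
      simp only [rcontr_tmul, smul_tmul, ← TensorProduct.tmul_sum]
      congr 1
      simp [Module.Basis.coord_apply, Module.Basis.sum_repr]
  | add t₁ t₂ h₁ h₂ => simp [add_tmul, Finset.sum_add_distrib, h₁, h₂]

lemma lcontr_inj {t t' : A ⊗[k] X}
    (h : ∀ x : Module.Dual k A, lcontr x t = lcontr (X := X) x t') : t = t' := by
  let b := Module.Free.chooseBasis k A
  rw [← lexpand b t, ← lexpand b t']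
  exact Finset.sum_congr rfl fun i _ => by rw [h]

lemma rcontr_inj {t t' : X ⊗[k] A}
    (h : ∀ x : Module.Dual k A, rcontr x t = rcontr (X := X) x t') : t = t' := by
  let b := Module.Free.chooseBasis k A
  rw [← rexpand b t, ← rexpand b t']
  exact Finset.sum_congr rfl fun i _ => by rw [h]

end Contr

section HopfSide

set_option linter.unusedSectionVars false

/-- convolution-type product on the dual: `(dstar A x y) h = x h₁ * y h₂`. -/
noncomputable def dstar (A : Bialg k H) (x y : Module.Dual k H) : Module.Dual k H :=
  (TensorProduct.dualDistrib k H H (x ⊗ₜ y)) ∘ₗ A.comul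

lemma dstar_apply (A : Bialg k H) (x y : Module.Dual k H) (h : H) :
    dstar A x y h = TensorProduct.dualDistrib k H H (x ⊗ₜ y) (A.comul h) := rfl

variable (A : Bialg k H) (βe : H ≃ₗ[k] H) (hβ : βe.toLinearMap = A.bmap)

lemma dstar_comp_bmap (x y : Module.Dual k H) :
    (dstar A x y) ∘ₗ A.bmap = dstar A (x ∘ₗ A.bmap) (y ∘ₗ A.bmap) := by
  apply LinearMap.ext; intro h
  simp only [LinearMap.comp_apply, dstar_apply, A.comul_bmap, dualDistrib_map]

lemma dstar_counit_left (g : Module.Dual k H) : dstar A A.counit g = g ∘ₗ A.bmap := by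
  apply LinearMap.ext; intro h
  rw [LinearMap.comp_apply, dstar_apply, ← apply_lcontr, ← A.counit_comul h, lid_eq_lcontr]

lemma dstar_counit_right (g : Module.Dual k H) : dstar A g A.counit = g ∘ₗ A.bmap := by
  apply LinearMap.ext; intro h
  rw [LinearMap.comp_apply, dstar_apply, ← apply_rcontr, ← A.comul_counit h, rid_eq_rcontr]

/-- functional identity used to contract with the comultiplication on the left. -/
lemma comp_lcontr_comul (p g : Module.Dual k H) :
    g ∘ₗ ((lcontr p : H ⊗[k] H →ₗ[k] H) ∘ₗ A.comul) = dstar A p g := by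
  apply LinearMap.ext; intro h
  rw [LinearMap.comp_apply, LinearMap.comp_apply, apply_lcontr, dstar_apply]

lemma comp_rcontr_comul (s g : Module.Dual k H) :
    g ∘ₗ ((rcontr s : H ⊗[k] H →ₗ[k] H) ∘ₗ A.comul) = dstar A g s := by
  apply LinearMap.ext; intro h
  rw [LinearMap.comp_apply, LinearMap.comp_apply, apply_rcontr, dstar_apply]

include hβ

lemma bmap_binv (h : H) : A.bmap (βe.symm h) = h := by
  rw [← hβ]; exact βe.apply_symm_apply h

lemma binv_bmap (h : H) : βe.symm (A.bmap h) = h := by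
  rw [← hβ]; exact βe.symm_apply_apply h

lemma comp_bmap_binv (x : Module.Dual k H) : (x ∘ₗ A.bmap) ∘ₗ βe.symm.toLinearMap = x := by
  apply LinearMap.ext; intro h
  simp [LinearEquiv.coe_coe, bmap_binv A βe hβ]

lemma comp_binv_bmap (x : Module.Dual k H) : (x ∘ₗ βe.symm.toLinearMap) ∘ₗ A.bmap = x := by
  apply LinearMap.ext; intro h
  simp [LinearEquiv.coe_coe, binv_bmap A βe hβ]

lemma comul_binv (h : H) :
    A.comul (βe.symm.toLinearMap h)
      = TensorProduct.map βe.symm.toLinearMap βe.symm.toLinearMap (A.comul h) := by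
  have h1 : A.comul h = TensorProduct.map A.bmap A.bmap (A.comul (βe.symm.toLinearMap h)) := by
    conv_lhs => rw [show h = A.bmap (βe.symm.toLinearMap h) from (bmap_binv A βe hβ h).symm]
    exact A.comul_bmap _
  rw [h1, map_map]
  have e1 : (βe.symm.toLinearMap ∘ₗ A.bmap) = LinearMap.id := by
    apply LinearMap.ext; intro h; simp [binv_bmap A βe hβ]
  rw [e1]
  simp [TensorProduct.map_id]

lemma counit_binv (h : H) : A.counit (βe.symm h) = A.counit h := by
  conv_rhs => rw [← bmap_binv A βe hβ h]
  rw [A.counit_bmap]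

lemma counit_comp_binv : A.counit ∘ₗ βe.symm.toLinearMap = A.counit := by
  apply LinearMap.ext; intro h
  simp [LinearEquiv.coe_coe, counit_binv A βe hβ]

lemma dstar_comp_binv (x y : Module.Dual k H) :
    (dstar A x y) ∘ₗ βe.symm.toLinearMap
      = dstar A (x ∘ₗ βe.symm.toLinearMap) (y ∘ₗ βe.symm.toLinearMap) := by
  apply LinearMap.ext; intro h
  simp only [LinearMap.comp_apply, dstar_apply, comul_binv A βe hβ, dualDistrib_map]

end HopfSide

section DualMulFacts

variable (A : Hopf k H) (βe : H ≃ₗ[k] H) (hβ : βe.toLinearMap = A.bmap)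

set_option linter.unusedSectionVars false
include hβ

lemma dualMul_apply (x y : Module.Dual k H) (h : H) :
    dualMul k A βe.symm.toLinearMap x y h
      = TensorProduct.dualDistrib k H H (x ⊗ₜ y)
          (TensorProduct.map (βe.symm.toLinearMap ∘ₗ βe.symm.toLinearMap)
            (βe.symm.toLinearMap ∘ₗ βe.symm.toLinearMap) (A.comul h)) := by
  simp [dualMul, TensorProduct.curry_apply, LinearMap.dualMap_apply]

lemma dualMul_eq_dstar (x y : Module.Dual k H) :
    dualMul k A βe.symm.toLinearMap x y
      = dstar A.toBialg (x ∘ₗ (βe.symm.toLinearMap ∘ₗ βe.symm.toLinearMap))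
          (y ∘ₗ (βe.symm.toLinearMap ∘ₗ βe.symm.toLinearMap)) := by
  apply LinearMap.ext; intro h
  rw [dualMul_apply A βe hβ, dstar_apply, dualDistrib_map]

lemma dualMul_counit_left (y : Module.Dual k H) :
    dualMul k A βe.symm.toLinearMap A.counit y = y ∘ₗ βe.symm.toLinearMap := by
  rw [dualMul_eq_dstar A βe hβ]
  have e1 : A.counit ∘ₗ (βe.symm.toLinearMap ∘ₗ βe.symm.toLinearMap) = A.toBialg.counit := by
    apply LinearMap.ext; intro h
    simp [LinearEquiv.coe_coe, counit_binv A.toBialg βe hβ]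
  rw [e1, dstar_counit_left A.toBialg]
  apply LinearMap.ext; intro h
  simp [LinearEquiv.coe_coe, binv_bmap A.toBialg βe hβ]

lemma dualMul_counit_right (y : Module.Dual k H) :
    dualMul k A βe.symm.toLinearMap y A.counit = y ∘ₗ βe.symm.toLinearMap := by
  rw [dualMul_eq_dstar A βe hβ]
  have e1 : A.counit ∘ₗ (βe.symm.toLinearMap ∘ₗ βe.symm.toLinearMap) = A.toBialg.counit := by
    apply LinearMap.ext; intro h
    simp [LinearEquiv.coe_coe, counit_binv A.toBialg βe hβ]
  rw [e1, dstar_counit_right A.toBialg]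
  apply LinearMap.ext; intro h
  simp [LinearEquiv.coe_coe, binv_bmap A.toBialg βe hβ]

end DualMulFacts

end Aux


section CoMod

variable {k}
variable (A : Hopf k H) (βe : H ≃ₗ[k] H) (hβ : βe.toLinearMap = A.bmap)
variable (ζMe : M ≃ₗ[k] M) (ρl : M →ₗ[k] H ⊗[k] M) (ρr : M →ₗ[k] M ⊗[k] H)

set_option linter.unusedSectionVars false

/-- the double contraction `m ↦ p(m₍₋₁₎) s(m₍₀₎⁽¹⁾) • m₍₀₎⁽⁰⁾`. -/
noncomputable def Jmap (p s : Module.Dual k H) : M →ₗ[k] M :=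
  rcontr s ∘ₗ ρr ∘ₗ lcontr p ∘ₗ ρl

lemma Jmap_apply (p s : Module.Dual k H) (m : M) :
    Jmap ρl ρr p s m = rcontr s (ρr (lcontr p (ρl m))) := rfl

lemma subA
    (hbi : ∀ m, TensorProduct.map A.bmap ρr (ρl m)
      = TensorProduct.assoc k H M H (TensorProduct.map ρl A.bmap (ρr m)))
    (q : Module.Dual k H) (n : M) :
    ρr (lcontr (q ∘ₗ A.bmap) (ρl n))
      = TensorProduct.map ((lcontr q : H ⊗[k] M →ₗ[k] M) ∘ₗ ρl) A.bmap (ρr n) := by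
  have h := congrArg (lcontr q) (hbi n)
  rw [lcontr_map, lcontr_assoc, map_map, LinearMap.id_comp] at h
  exact h

lemma subL (hl : IsLCom k A.toBialg ζMe.toLinearMap ρl) (p : Module.Dual k H) (n : M) :
    ρl (lcontr (p ∘ₗ A.bmap) (ρl n))
      = TensorProduct.map ((lcontr p : H ⊗[k] H →ₗ[k] H) ∘ₗ A.comul)
          ζMe.toLinearMap (ρl n) := by
  have h := congrArg (lcontr p) (hl.coassoc n)
  rw [lcontr_map, lcontr_assoc, map_map, LinearMap.id_comp] at h
  exact h

lemma subR (hr : IsRCom k A.toBialg ζMe.toLinearMap ρr) (s : Module.Dual k H) (n : M) :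
    ρr (rcontr (s ∘ₗ A.bmap) (ρr n))
      = TensorProduct.map ζMe.toLinearMap
          ((rcontr s : H ⊗[k] H →ₗ[k] H) ∘ₗ A.comul) (ρr n) := by
  have h := congrArg (rcontr s) (hr.coassoc n)
  rw [rcontr_map, rcontr_assoc_symm, map_map, LinearMap.id_comp] at h
  exact h

lemma Jzeta (hl : IsLCom k A.toBialg ζMe.toLinearMap ρl)
    (hr : IsRCom k A.toBialg ζMe.toLinearMap ρr) (p s : Module.Dual k H) (m : M) :
    Jmap ρl ρr p s (ζMe.toLinearMap m)
      = ζMe.toLinearMap (Jmap ρl ρr (p ∘ₗ A.bmap) (s ∘ₗ A.bmap) m) := by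
  rw [Jmap_apply, hl.coact_zeta m, lcontr_map, hr.coact_zeta, rcontr_map, Jmap_apply]

include hβ in
lemma Jzetainv (hl : IsLCom k A.toBialg ζMe.toLinearMap ρl)
    (hr : IsRCom k A.toBialg ζMe.toLinearMap ρr) (p s : Module.Dual k H) (m : M) :
    Jmap ρl ρr p s (ζMe.symm.toLinearMap m)
      = ζMe.symm.toLinearMap
          (Jmap ρl ρr (p ∘ₗ βe.symm.toLinearMap) (s ∘ₗ βe.symm.toLinearMap) m) := by
  have h := Jzeta A ζMe ρl ρr hl hr (p ∘ₗ βe.symm.toLinearMap) (s ∘ₗ βe.symm.toLinearMap)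
    (ζMe.symm.toLinearMap m)
  have hm : ζMe.toLinearMap (ζMe.symm.toLinearMap m) = m := by
    simp
  have hp : (p ∘ₗ βe.symm.toLinearMap) ∘ₗ A.bmap = p := comp_binv_bmap A.toBialg βe hβ p
  have hs : (s ∘ₗ βe.symm.toLinearMap) ∘ₗ A.bmap = s := comp_binv_bmap A.toBialg βe hβ s
  rw [hm, hp, hs] at h
  rw [h]
  simp

include hβ in
lemma key (hl : IsLCom k A.toBialg ζMe.toLinearMap ρl)
    (hr : IsRCom k A.toBialg ζMe.toLinearMap ρr)
    (hbi : ∀ m, TensorProduct.map A.bmap ρr (ρl m)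
      = TensorProduct.assoc k H M H (TensorProduct.map ρl A.bmap (ρr m)))
    (p q r s : Module.Dual k H) (m : M) :
    Jmap ρl ρr q r (Jmap ρl ρr p s m)
      = ζMe.toLinearMap (ζMe.toLinearMap
          (Jmap ρl ρr
            (dstar A.toBialg (p ∘ₗ βe.symm.toLinearMap) (q ∘ₗ A.bmap))
            (dstar A.toBialg (r ∘ₗ A.bmap) (s ∘ₗ βe.symm.toLinearMap)) m)) := by
  set βi := βe.symm.toLinearMap with hβidef
  set u := lcontr p (ρl m) with hu
  -- step 1 : pull the inner `rcontr s` outside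
  have e1 : Jmap ρl ρr q r (Jmap ρl ρr p s m)
      = rcontr s (TensorProduct.map (Jmap ρl ρr q r) LinearMap.id (ρr u)) := by
    have h := rcontr_map s (Jmap ρl ρr q r) (LinearMap.id : H →ₗ[k] H) (ρr u)
    rw [LinearMap.comp_id] at h
    rw [h]; rfl
  -- step 2 : use the bicomodule identity
  have hid : βi ∘ₗ A.bmap = LinearMap.id := by
    apply LinearMap.ext; intro h
    simp [hβidef, binv_bmap A.toBialg βe hβ]
  have hJ : (rcontr r ∘ₗ ρr) ∘ₗ ((lcontr q : H ⊗[k] M →ₗ[k] M) ∘ₗ ρl) = Jmap ρl ρr q r := rfl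
  have e2 : TensorProduct.map (Jmap ρl ρr q r) LinearMap.id (ρr u)
      = TensorProduct.map (rcontr r ∘ₗ ρr) βi (ρr (lcontr (q ∘ₗ A.bmap) (ρl u))) := by
    rw [subA A ρl ρr hbi q u, map_map, hJ, hid]
  -- step 3 : contract
  have e3 : rcontr s
        (TensorProduct.map (rcontr r ∘ₗ ρr) βi (ρr (lcontr (q ∘ₗ A.bmap) (ρl u))))
      = rcontr r (ρr (rcontr (s ∘ₗ βi) (ρr (lcontr (q ∘ₗ A.bmap) (ρl u))))) := by
    rw [rcontr_map]; rfl
  set v := lcontr (q ∘ₗ A.bmap) (ρl u) with hv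
  -- step 4 : right coassociativity
  have hs2 : s ∘ₗ βi = (s ∘ₗ (βi ∘ₗ βi)) ∘ₗ A.bmap := by
    apply LinearMap.ext; intro h
    simp [hβidef, binv_bmap A.toBialg βe hβ]
  have e4 : rcontr r (ρr (rcontr (s ∘ₗ βi) (ρr v)))
      = ζMe.toLinearMap (rcontr (dstar A.toBialg r (s ∘ₗ (βi ∘ₗ βi))) (ρr v)) := by
    rw [hs2, subR A ζMe ρr hr, rcontr_map, comp_rcontr_comul]
  -- step 5 : compute v via left coassociativity
  have hp2 : p = (p ∘ₗ βi) ∘ₗ A.bmap := by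
    apply LinearMap.ext; intro h
    simp [hβidef, binv_bmap A.toBialg βe hβ]
  have e5 : v = ζMe.toLinearMap
      (lcontr (dstar A.toBialg (p ∘ₗ βi) (q ∘ₗ A.bmap)) (ρl m)) := by
    rw [hv, hu, hp2, subL A ζMe ρl hl, lcontr_map, comp_lcontr_comul,
      comp_bmap_binv A.toBialg βe hβ (p ∘ₗ βi)]
  set w := lcontr (dstar A.toBialg (p ∘ₗ βi) (q ∘ₗ A.bmap)) (ρl m) with hw
  -- step 6 : move ζ outside
  have e6 : rcontr (dstar A.toBialg r (s ∘ₗ (βi ∘ₗ βi))) (ρr (ζMe.toLinearMap w))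
      = ζMe.toLinearMap
          (rcontr (dstar A.toBialg (r ∘ₗ A.bmap) (s ∘ₗ βi)) (ρr w)) := by
    rw [hr.coact_zeta, rcontr_map, dstar_comp_bmap]
    have hss : (s ∘ₗ (βi ∘ₗ βi)) ∘ₗ A.bmap = s ∘ₗ βi := by
      apply LinearMap.ext; intro h
      simp [hβidef, binv_bmap A.toBialg βe hβ]
    rw [hss]
  rw [e1, e2, e3, e4, e5, e6]
  rfl


lemma dualMap_comp (f : H →ₗ[k] H) (g : Module.Dual k H) : f.dualMap g = g ∘ₗ f := rfl

lemma bridge (x y : Module.Dual k H) (t : H ⊗[k] (M ⊗[k] H)) :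
    TensorProduct.rid k M
      (TensorProduct.map LinearMap.id (TensorProduct.dualDistrib k H H (x ⊗ₜ[k] y))
        (TensorProduct.leftComm k H M H
          (TensorProduct.map LinearMap.id
            (TensorProduct.map ζMe.symm.toLinearMap βe.symm.toLinearMap) t)))
      = ζMe.symm.toLinearMap (rcontr (y ∘ₗ βe.symm.toLinearMap) (lcontr x t)) := by
  induction t using TensorProduct.induction_on with
  | zero => simp
  | tmul h w =>
      induction w using TensorProduct.induction_on with
      | zero => simp
      | tmul n h' =>
          rw [TensorProduct.map_tmul, TensorProduct.map_tmul, TensorProduct.leftComm_tmul,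
            TensorProduct.map_tmul, TensorProduct.dualDistrib_apply, TensorProduct.rid_tmul,
            lcontr_tmul, map_smul, rcontr_tmul, map_smul]
          simp only [LinearMap.id_coe, id_eq, LinearMap.comp_apply, map_smul, mul_smul]
      | add w₁ w₂ g₁ g₂ =>
          simp only [tmul_add, map_add] at g₁ g₂ ⊢
          rw [g₁, g₂]
  | add t₁ t₂ h₁ h₂ =>
      simp only [map_add] at h₁ h₂ ⊢
      rw [h₁, h₂]

lemma formula_J (x y : Module.Dual k H) (m : M) :
    TensorProduct.rid k M
      (TensorProduct.map LinearMap.id (TensorProduct.dualDistrib k H H (x ⊗ₜ[k] y))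
        (TensorProduct.leftComm k H M H
          (TensorProduct.map LinearMap.id
            (TensorProduct.map ζMe.symm.toLinearMap βe.symm.toLinearMap)
            (TensorProduct.map LinearMap.id ρr (ρl m)))))
      = ζMe.symm.toLinearMap (Jmap ρl ρr x (y ∘ₗ βe.symm.toLinearMap) m) := by
  rw [bridge, lcontr_map, LinearMap.comp_id, Jmap_apply]

/-- the action associated to a bicomodule. -/
noncomputable def actOf :
    (Module.Dual k H) ⊗[k] (Module.Dual k H) →ₗ[k] M →ₗ[k] M :=
  TensorProduct.lift (LinearMap.mk₂ k
    (fun x y => ζMe.symm.toLinearMap ∘ₗ Jmap ρl ρr x (y ∘ₗ βe.symm.toLinearMap))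
    (fun x x' y => by
      apply LinearMap.ext; intro m
      simp [Jmap_apply, lcontr_add, LinearMap.add_apply, map_add])
    (fun c x y => by
      apply LinearMap.ext; intro m
      simp [Jmap_apply, lcontr_smul, LinearMap.smul_apply, map_smul])
    (fun x y y' => by
      apply LinearMap.ext; intro m
      simp [Jmap_apply, LinearMap.add_comp, rcontr_add, LinearMap.add_apply, map_add])
    (fun c y x => by
      apply LinearMap.ext; intro m
      simp [Jmap_apply, LinearMap.smul_comp, rcontr_smul, LinearMap.smul_apply, map_smul]))

lemma actOf_tmul (x y : Module.Dual k H) (m : M) :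
    actOf βe ζMe ρl ρr (x ⊗ₜ[k] y) m
      = ζMe.symm.toLinearMap (Jmap ρl ρr x (y ∘ₗ βe.symm.toLinearMap) m) := by
  simp [actOf, TensorProduct.lift.tmul]

include hβ in
lemma dir2 (hl : IsLCom k A.toBialg ζMe.toLinearMap ρl)
    (hr : IsRCom k A.toBialg ζMe.toLinearMap ρr)
    (hbi : ∀ m, TensorProduct.map A.bmap ρr (ρl m)
      = TensorProduct.assoc k H M H (TensorProduct.map ρl A.bmap (ρr m))) :
    IsLModOf k
        (TensorProduct.map₂ (dualMul k A βe.symm.toLinearMap).flip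
          (dualMul k A βe.symm.toLinearMap))
        (A.counit ⊗ₜ[k] A.counit)
        (TensorProduct.map (βe.symm.toLinearMap.dualMap) (βe.symm.toLinearMap.dualMap))
        ζMe.toLinearMap (actOf βe ζMe ρl ρr) ∧
      dualActCond k βe.symm.toLinearMap ζMe.symm.toLinearMap (actOf βe ζMe ρl ρr) ρl ρr := by
  have hcancel : ∀ z : Module.Dual k H, (z ∘ₗ βe.symm.toLinearMap) ∘ₗ A.bmap = z :=
    fun z => comp_binv_bmap A.toBialg βe hβ z
  have hcancel2 : ∀ z : Module.Dual k H, (z ∘ₗ A.bmap) ∘ₗ βe.symm.toLinearMap = z :=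
    fun z => comp_bmap_binv A.toBialg βe hβ z
  constructor
  · constructor
    · -- assoc
      intro a b m
      induction a using TensorProduct.induction_on with
      | zero => simp
      | add a₁ a₂ h₁ h₂ => simp only [map_add, LinearMap.add_apply, h₁, h₂]
      | tmul x y =>
        induction b using TensorProduct.induction_on with
        | zero => simp
        | add b₁ b₂ g₁ g₂ =>
            simp only [map_add, LinearMap.add_apply, map_zero, LinearMap.map_add₂] at g₁ g₂ ⊢
            rw [← g₁, ← g₂]
        | tmul x' y' =>
            rw [TensorProduct.map_tmul, TensorProduct.map₂_apply_tmul, TensorProduct.map_tmul]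
            simp only [dualMap_comp, LinearMap.flip_apply]
            rw [actOf_tmul, actOf_tmul, actOf_tmul,
              Jzetainv A βe hβ ζMe ρl ρr hl hr,
              key A βe hβ ζMe ρl ρr hl hr hbi,
              Jzeta A ζMe ρl ρr hl hr]
            simp only [LinearEquiv.coe_coe, LinearEquiv.symm_apply_apply]
            rw [hcancel (x ∘ₗ βe.symm.toLinearMap),
              hcancel ((y ∘ₗ βe.symm.toLinearMap) ∘ₗ βe.symm.toLinearMap),
              hcancel (dualMul k A βe.symm.toLinearMap y y')]
            have hA : (dualMul k A βe.symm.toLinearMap x' x) ∘ₗ A.bmap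
                = dstar A.toBialg (x' ∘ₗ βe.symm.toLinearMap) (x ∘ₗ βe.symm.toLinearMap) := by
              rw [dualMul_eq_dstar A βe hβ, dstar_comp_bmap]
              congr 1 <;>
                (apply LinearMap.ext; intro h;
                 simp [LinearEquiv.coe_coe, binv_bmap A.toBialg βe hβ])
            have hB : dualMul k A βe.symm.toLinearMap y y'
                = dstar A.toBialg ((y ∘ₗ βe.symm.toLinearMap) ∘ₗ βe.symm.toLinearMap)
                    ((y' ∘ₗ βe.symm.toLinearMap) ∘ₗ βe.symm.toLinearMap) := by
              rw [dualMul_eq_dstar A βe hβ]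
              congr 1 <;> (apply LinearMap.ext; intro h; simp)
            rw [hA, hB]
    · -- zeta_act
      intro a m
      induction a using TensorProduct.induction_on with
      | zero => simp
      | add a₁ a₂ h₁ h₂ => simp only [map_add, LinearMap.add_apply, h₁, h₂]
      | tmul x y =>
          rw [TensorProduct.map_tmul]
          simp only [dualMap_comp]
          rw [actOf_tmul, actOf_tmul, Jzeta A ζMe ρl ρr hl hr]
          simp only [LinearEquiv.coe_coe, LinearEquiv.apply_symm_apply,
            LinearEquiv.symm_apply_apply]
          rw [hcancel x, hcancel (y ∘ₗ βe.symm.toLinearMap)]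
    · -- one_act
      intro m
      rw [actOf_tmul]
      have h1 : A.counit ∘ₗ βe.symm.toLinearMap = A.counit := counit_comp_binv A.toBialg βe hβ
      rw [h1, Jmap_apply]
      have h2 : lcontr A.counit (ρl m) = ζMe.toLinearMap m := by
        rw [← lid_eq_lcontr]; exact hl.counit_coact m
      have h3 : ∀ n, rcontr A.counit (ρr n) = ζMe.toLinearMap n := by
        intro n; rw [← rid_eq_rcontr]; exact hr.coact_counit n
      rw [h2, h3]
      simp
  · -- dualActCond
    intro x y m
    rw [actOf_tmul, formula_J]

end CoMod


section Assemble

variable {k}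
variable (A : Hopf k H) (βe : H ≃ₗ[k] H) (hβ : βe.toLinearMap = A.bmap)
variable (ζMe : M ≃ₗ[k] M)

set_option linter.unusedSectionVars false

include hβ in
lemma part4 (act act' : (Module.Dual k H) ⊗[k] (Module.Dual k H) →ₗ[k] M →ₗ[k] M)
    (ρl : M →ₗ[k] H ⊗[k] M) (ρr : M →ₗ[k] M ⊗[k] H)
    (hc : dualActCond k βe.symm.toLinearMap ζMe.symm.toLinearMap act ρl ρr)
    (hc' : dualActCond k βe.symm.toLinearMap ζMe.symm.toLinearMap act' ρl ρr) :
    act = act' := by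
  apply TensorProduct.ext'
  intro x y
  apply LinearMap.ext
  intro m
  rw [hc x y m, hc' x y m]

include hβ in
lemma part3 [FiniteDimensional k H]
    (act : (Module.Dual k H) ⊗[k] (Module.Dual k H) →ₗ[k] M →ₗ[k] M)
    (ρl ρl' : M →ₗ[k] H ⊗[k] M) (ρr ρr' : M →ₗ[k] M ⊗[k] H)
    (hl : IsLCom k A.toBialg ζMe.toLinearMap ρl)
    (hr : IsRCom k A.toBialg ζMe.toLinearMap ρr)
    (hl' : IsLCom k A.toBialg ζMe.toLinearMap ρl')
    (hr' : IsRCom k A.toBialg ζMe.toLinearMap ρr')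
    (hc : dualActCond k βe.symm.toLinearMap ζMe.symm.toLinearMap act ρl ρr)
    (hc' : dualActCond k βe.symm.toLinearMap ζMe.symm.toLinearMap act ρl' ρr') :
    ρl = ρl' ∧ ρr = ρr' := by
  have hζ : Function.Injective ζMe.toLinearMap := ζMe.injective
  -- the two J-datas agree
  have hJ : ∀ (x s : Module.Dual k H) (m : M),
      Jmap ρl ρr x s m = Jmap ρl' ρr' x s m := by
    intro x s m
    have h1 := hc x (s ∘ₗ A.bmap) m
    have h2 := hc' x (s ∘ₗ A.bmap) m
    rw [formula_J] at h1
    rw [formula_J] at h2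
    have h3 := h2.symm.trans h1
    have hcomp : (s ∘ₗ A.bmap) ∘ₗ βe.symm.toLinearMap = s := comp_bmap_binv A.toBialg βe hβ s
    rw [hcomp] at h3
    exact (ζMe.symm.injective h3).symm
  constructor
  · apply LinearMap.ext; intro m
    apply lcontr_inj; intro x
    apply hζ
    have e1 : ∀ (ρr₀ : M →ₗ[k] M ⊗[k] H) (hr₀ : IsRCom k A.toBialg ζMe.toLinearMap ρr₀)
        (ρl₀ : M →ₗ[k] H ⊗[k] M),
        Jmap ρl₀ ρr₀ x A.counit m = ζMe.toLinearMap (lcontr x (ρl₀ m)) := by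
      intro ρr₀ hr₀ ρl₀
      rw [Jmap_apply, ← rid_eq_rcontr, hr₀.coact_counit]
    rw [← e1 ρr hr ρl, ← e1 ρr' hr' ρl', hJ]
  · apply LinearMap.ext; intro m
    apply rcontr_inj; intro s
    apply hζ
    have e2 : ∀ (ρl₀ : M →ₗ[k] H ⊗[k] M) (hl₀ : IsLCom k A.toBialg ζMe.toLinearMap ρl₀)
        (ρr₀ : M →ₗ[k] M ⊗[k] H) (hr₀ : IsRCom k A.toBialg ζMe.toLinearMap ρr₀),
        Jmap ρl₀ ρr₀ A.counit (s ∘ₗ βe.symm.toLinearMap) m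
          = ζMe.toLinearMap (rcontr s (ρr₀ m)) := by
      intro ρl₀ hl₀ ρr₀ hr₀
      rw [Jmap_apply, ← lid_eq_lcontr, hl₀.counit_coact, hr₀.coact_zeta, rcontr_map,
        comp_binv_bmap A.toBialg βe hβ s]
    rw [← e2 ρl hl ρr hr, ← e2 ρl' hl' ρr' hr', hJ]

include hβ in
lemma dir1 [FiniteDimensional k H]
    (act : (Module.Dual k H) ⊗[k] (Module.Dual k H) →ₗ[k] M →ₗ[k] M)
    (hmod : IsLModOf k
        (TensorProduct.map₂ (dualMul k A βe.symm.toLinearMap).flip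
          (dualMul k A βe.symm.toLinearMap))
        (A.counit ⊗ₜ[k] A.counit)
        (TensorProduct.map (βe.symm.toLinearMap.dualMap) (βe.symm.toLinearMap.dualMap))
        ζMe.toLinearMap act) :
    ∃ (ρl : M →ₗ[k] H ⊗[k] M) (ρr : M →ₗ[k] M ⊗[k] H),
      IsLCom k A.toBialg ζMe.toLinearMap ρl ∧
      IsRCom k A.toBialg ζMe.toLinearMap ρr ∧
      (∀ m, TensorProduct.map A.bmap ρr (ρl m)
        = TensorProduct.assoc k H M H (TensorProduct.map ρl A.bmap (ρr m))) ∧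
      dualActCond k βe.symm.toLinearMap ζMe.symm.toLinearMap act ρl ρr := by
  classical
  set b := Module.Free.chooseBasis k H with hb
  set ρL : M →ₗ[k] H ⊗[k] M :=
    ∑ i, TensorProduct.mk k H M (b i) ∘ₗ act (b.coord i ⊗ₜ[k] A.counit) with hρL
  set ρR : M →ₗ[k] M ⊗[k] H :=
    ∑ i, (TensorProduct.mk k M H).flip (b i) ∘ₗ act (A.counit ⊗ₜ[k] b.coord i) with hρR
  have hcanc1 : ∀ z : Module.Dual k H, (z ∘ₗ βe.symm.toLinearMap) ∘ₗ A.bmap = z :=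
    fun z => comp_binv_bmap A.toBialg βe hβ z
  have hcanc2 : ∀ z : Module.Dual k H, (z ∘ₗ A.bmap) ∘ₗ βe.symm.toLinearMap = z :=
    fun z => comp_bmap_binv A.toBialg βe hβ z
  have hεβi : A.counit ∘ₗ βe.symm.toLinearMap = A.counit := counit_comp_binv A.toBialg βe hβ
  have q1 : ∀ (x : Module.Dual k H) (m : M),
      lcontr x (ρL m) = act (x ⊗ₜ[k] A.counit) m := by
    intro x m
    conv_rhs => rw [← Module.Basis.sum_dual_apply_smul_coord b x]
    rw [hρL, TensorProduct.sum_tmul]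
    simp only [LinearMap.sum_apply, map_sum, LinearMap.coe_comp, Function.comp_apply,
      TensorProduct.mk_apply, lcontr_tmul]
    refine Finset.sum_congr rfl fun i _ => ?_
    rw [← TensorProduct.smul_tmul', map_smul, LinearMap.smul_apply]
  have q2 : ∀ (y : Module.Dual k H) (m : M),
      rcontr y (ρR m) = act (A.counit ⊗ₜ[k] y) m := by
    intro y m
    conv_rhs => rw [← Module.Basis.sum_dual_apply_smul_coord b y]
    rw [hρR, TensorProduct.tmul_sum]
    simp only [LinearMap.sum_apply, map_sum, LinearMap.coe_comp, Function.comp_apply,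
      LinearMap.flip_apply, TensorProduct.mk_apply, rcontr_tmul]
    refine Finset.sum_congr rfl fun i _ => ?_
    rw [TensorProduct.tmul_smul, map_smul, LinearMap.smul_apply]
  -- module structure consequences on pure tensors
  have hz : ∀ (x y : Module.Dual k H) (m : M),
      ζMe.toLinearMap (act (x ⊗ₜ[k] y) m)
        = act ((x ∘ₗ βe.symm.toLinearMap) ⊗ₜ[k] (y ∘ₗ βe.symm.toLinearMap))
            (ζMe.toLinearMap m) := by
    intro x y m
    have h := hmod.zeta_act (x ⊗ₜ[k] y) m
    rwa [TensorProduct.map_tmul, dualMap_comp, dualMap_comp] at h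
  have hassoc : ∀ (x y x' y' : Module.Dual k H) (m : M),
      act ((x ∘ₗ βe.symm.toLinearMap) ⊗ₜ[k] (y ∘ₗ βe.symm.toLinearMap))
          (act (x' ⊗ₜ[k] y') m)
        = act ((dualMul k A βe.symm.toLinearMap x' x)
            ⊗ₜ[k] (dualMul k A βe.symm.toLinearMap y y')) (ζMe.toLinearMap m) := by
    intro x y x' y' m
    have h := hmod.assoc (x ⊗ₜ[k] y) (x' ⊗ₜ[k] y') m
    rwa [TensorProduct.map_tmul, dualMap_comp, dualMap_comp, TensorProduct.map₂_apply_tmul,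
      TensorProduct.map_tmul, LinearMap.flip_apply] at h
  have hone : ∀ m, act (A.counit ⊗ₜ[k] A.counit) m = ζMe.toLinearMap m := hmod.one_act
  have hεε : dualMul k A βe.symm.toLinearMap A.counit A.counit = A.counit := by
    rw [dualMul_counit_left A βe hβ, hεβi]
  have f1 : ∀ (x : Module.Dual k H) (m : M),
      ζMe.toLinearMap (act (x ⊗ₜ[k] A.counit) m)
        = act ((x ∘ₗ βe.symm.toLinearMap) ⊗ₜ[k] A.counit) (ζMe.toLinearMap m) := by
    intro x m
    rw [hz x A.counit m, hεβi]
  have f2 : ∀ (y : Module.Dual k H) (m : M),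
      ζMe.toLinearMap (act (A.counit ⊗ₜ[k] y) m)
        = act (A.counit ⊗ₜ[k] (y ∘ₗ βe.symm.toLinearMap)) (ζMe.toLinearMap m) := by
    intro y m
    rw [hz A.counit y m, hεβi]
  have f3 : ∀ (x x' : Module.Dual k H) (m : M),
      act ((x ∘ₗ βe.symm.toLinearMap) ⊗ₜ[k] A.counit) (act (x' ⊗ₜ[k] A.counit) m)
        = act ((dualMul k A βe.symm.toLinearMap x' x) ⊗ₜ[k] A.counit)
            (ζMe.toLinearMap m) := by
    intro x x' m
    have h := hassoc x A.counit x' A.counit m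
    rwa [hεβi, hεε] at h
  have f4 : ∀ (y y' : Module.Dual k H) (m : M),
      act (A.counit ⊗ₜ[k] (y ∘ₗ βe.symm.toLinearMap)) (act (A.counit ⊗ₜ[k] y') m)
        = act (A.counit ⊗ₜ[k] (dualMul k A βe.symm.toLinearMap y y'))
            (ζMe.toLinearMap m) := by
    intro y y' m
    have h := hassoc A.counit y A.counit y' m
    rwa [hεβi, hεε] at h
  have f5 : ∀ (y x' : Module.Dual k H) (m : M),
      act (A.counit ⊗ₜ[k] (y ∘ₗ βe.symm.toLinearMap)) (act (x' ⊗ₜ[k] A.counit) m)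
        = act ((x' ∘ₗ βe.symm.toLinearMap) ⊗ₜ[k] (y ∘ₗ βe.symm.toLinearMap))
            (ζMe.toLinearMap m) := by
    intro y x' m
    have h := hassoc A.counit y x' A.counit m
    rwa [hεβi, dualMul_counit_right A βe hβ, dualMul_counit_right A βe hβ] at h
  have f6 : ∀ (x y' : Module.Dual k H) (m : M),
      act ((x ∘ₗ βe.symm.toLinearMap) ⊗ₜ[k] A.counit) (act (A.counit ⊗ₜ[k] y') m)
        = act ((x ∘ₗ βe.symm.toLinearMap) ⊗ₜ[k] (y' ∘ₗ βe.symm.toLinearMap))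
            (ζMe.toLinearMap m) := by
    intro x y' m
    have h := hassoc x A.counit A.counit y' m
    rwa [hεβi, dualMul_counit_left A βe hβ, dualMul_counit_left A βe hβ] at h
  -- the functional identity (x∘β)•(y∘β) = (x ⋆ y)∘βi
  have fstar : ∀ (x y : Module.Dual k H),
      dualMul k A βe.symm.toLinearMap (x ∘ₗ A.bmap) (y ∘ₗ A.bmap)
        = (dstar A.toBialg x y) ∘ₗ βe.symm.toLinearMap := by
    intro x y
    rw [dualMul_eq_dstar A βe hβ, dstar_comp_binv A.toBialg βe hβ]
    congr 1 <;>
      (apply LinearMap.ext; intro h;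
       simp [LinearEquiv.coe_coe, binv_bmap A.toBialg βe hβ, bmap_binv A.toBialg βe hβ])
  refine ⟨ρL, ρR, ⟨?_, ?_, ?_⟩, ⟨?_, ?_, ?_⟩, ?_, ?_⟩
  · -- coact_zeta for ρL
    intro m
    apply lcontr_inj; intro x
    rw [q1, lcontr_map, q1, f1 (x ∘ₗ A.bmap) m, hcanc2 x]
  · -- counit_coact
    intro m
    rw [lid_eq_lcontr, q1, hone]
  · -- coassoc left
    intro m
    apply lcontr_inj; intro x
    apply lcontr_inj; intro y
    have L1 : lcontr y (lcontr x (TensorProduct.map A.bmap ρL (ρL m)))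
        = act (y ⊗ₜ[k] A.counit) (act ((x ∘ₗ A.bmap) ⊗ₜ[k] A.counit) m) := by
      rw [lcontr_map, q1, q1]
    have L2 : act (y ⊗ₜ[k] A.counit) (act ((x ∘ₗ A.bmap) ⊗ₜ[k] A.counit) m)
        = act ((dualMul k A βe.symm.toLinearMap (x ∘ₗ A.bmap) (y ∘ₗ A.bmap)) ⊗ₜ[k] A.counit)
            (ζMe.toLinearMap m) := by
      conv_lhs => rw [← hcanc2 y]
      exact f3 (y ∘ₗ A.bmap) (x ∘ₗ A.bmap) m
    have R1 : lcontr y (lcontr x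
          (TensorProduct.assoc k H H M (TensorProduct.map A.comul ζMe.toLinearMap (ρL m))))
        = ζMe.toLinearMap (act ((dstar A.toBialg x y) ⊗ₜ[k] A.counit) m) := by
      rw [lcontr_assoc, map_map, LinearMap.id_comp, lcontr_map,
        comp_lcontr_comul A.toBialg x y, q1]
    rw [L1, L2, R1, f1 (dstar A.toBialg x y) m, fstar x y]
  · -- coact_zeta for ρR
    intro m
    apply rcontr_inj; intro y
    rw [q2, rcontr_map, q2, f2 (y ∘ₗ A.bmap) m, hcanc2 y]
  · -- coact_counit
    intro m
    rw [rid_eq_rcontr, q2, hone]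
  · -- coassoc right
    intro m
    apply rcontr_inj; intro z
    apply rcontr_inj; intro y
    have L1 : rcontr y (rcontr z (TensorProduct.map ρR A.bmap (ρR m)))
        = act (A.counit ⊗ₜ[k] y) (act (A.counit ⊗ₜ[k] (z ∘ₗ A.bmap)) m) := by
      rw [rcontr_map, q2, q2]
    have L2 : act (A.counit ⊗ₜ[k] y) (act (A.counit ⊗ₜ[k] (z ∘ₗ A.bmap)) m)
        = act (A.counit ⊗ₜ[k] (dualMul k A βe.symm.toLinearMap (y ∘ₗ A.bmap) (z ∘ₗ A.bmap)))
            (ζMe.toLinearMap m) := by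
      conv_lhs => rw [← hcanc2 y]
      exact f4 (y ∘ₗ A.bmap) (z ∘ₗ A.bmap) m
    have R1 : rcontr y (rcontr z
          ((TensorProduct.assoc k M H H).symm
            (TensorProduct.map ζMe.toLinearMap A.comul (ρR m))))
        = ζMe.toLinearMap (act (A.counit ⊗ₜ[k] (dstar A.toBialg y z)) m) := by
      rw [rcontr_assoc_symm, map_map, LinearMap.id_comp, rcontr_map,
        comp_rcontr_comul A.toBialg z y, q2]
    rw [L1, L2, R1, f2 (dstar A.toBialg y z) m, fstar y z]
  · -- bicom
    intro m
    apply lcontr_inj; intro x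
    apply rcontr_inj; intro y
    have L1 : rcontr y (lcontr x (TensorProduct.map A.bmap ρR (ρL m)))
        = act (A.counit ⊗ₜ[k] y) (act ((x ∘ₗ A.bmap) ⊗ₜ[k] A.counit) m) := by
      rw [lcontr_map, q1, q2]
    have L2 : act (A.counit ⊗ₜ[k] y) (act ((x ∘ₗ A.bmap) ⊗ₜ[k] A.counit) m)
        = act (x ⊗ₜ[k] y) (ζMe.toLinearMap m) := by
      conv_lhs => rw [← hcanc2 y]
      rw [f5 (y ∘ₗ A.bmap) (x ∘ₗ A.bmap) m, hcanc2 x, hcanc2 y]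
    have R1 : rcontr y (lcontr x
          (TensorProduct.assoc k H M H (TensorProduct.map ρL A.bmap (ρR m))))
        = act (x ⊗ₜ[k] A.counit) (act (A.counit ⊗ₜ[k] (y ∘ₗ A.bmap)) m) := by
      rw [lcontr_assoc, map_map, LinearMap.id_comp, rcontr_map, LinearMap.comp_apply, q2, q1]
    have R2 : act (x ⊗ₜ[k] A.counit) (act (A.counit ⊗ₜ[k] (y ∘ₗ A.bmap)) m)
        = act (x ⊗ₜ[k] y) (ζMe.toLinearMap m) := by
      conv_lhs => rw [← hcanc2 x]
      rw [f6 (x ∘ₗ A.bmap) (y ∘ₗ A.bmap) m, hcanc2 x, hcanc2 y]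
    rw [L1, L2, R1, R2]
  · -- dualActCond
    intro x y m
    rw [formula_J βe ζMe ρL ρR, Jmap_apply, q1, q2, f5, ← hz]
    simp

end Assemble

/-- for finite dimensional `(H, β)`, left `H^{*op} ⊗ H^*`-module structures on
`(M, ζ_M)` are in bijection with `H`-bicomodule structures, recovered by the pairing formula. -/
theorem dual_modules_are_bicomodules (H : Type) [AddCommGroup H] [Module k H]
    [FiniteDimensional k H]
    (A : Hopf k H) (βe : H ≃ₗ[k] H) (hβ : βe.toLinearMap = A.bmap)
    (M : Type) [AddCommGroup M] [Module k M] (ζMe : M ≃ₗ[k] M) :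
    (∀ act : (Module.Dual k H) ⊗[k] (Module.Dual k H) →ₗ[k] M →ₗ[k] M,
      IsLModOf k
          (TensorProduct.map₂ (dualMul k A βe.symm.toLinearMap).flip
            (dualMul k A βe.symm.toLinearMap))
          (A.counit ⊗ₜ[k] A.counit)
          (TensorProduct.map (βe.symm.toLinearMap.dualMap) (βe.symm.toLinearMap.dualMap))
          ζMe.toLinearMap act →
      ∃ (ρl : M →ₗ[k] H ⊗[k] M) (ρr : M →ₗ[k] M ⊗[k] H),
        IsLCom k A.toBialg ζMe.toLinearMap ρl ∧
        IsRCom k A.toBialg ζMe.toLinearMap ρr ∧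
        (∀ m, TensorProduct.map A.bmap ρr (ρl m)
          = TensorProduct.assoc k H M H (TensorProduct.map ρl A.bmap (ρr m))) ∧
        dualActCond k βe.symm.toLinearMap ζMe.symm.toLinearMap act ρl ρr) ∧
    (∀ (ρl : M →ₗ[k] H ⊗[k] M) (ρr : M →ₗ[k] M ⊗[k] H),
      IsLCom k A.toBialg ζMe.toLinearMap ρl →
      IsRCom k A.toBialg ζMe.toLinearMap ρr →
      (∀ m, TensorProduct.map A.bmap ρr (ρl m)
        = TensorProduct.assoc k H M H (TensorProduct.map ρl A.bmap (ρr m))) →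
      ∃ act : (Module.Dual k H) ⊗[k] (Module.Dual k H) →ₗ[k] M →ₗ[k] M,
        IsLModOf k
          (TensorProduct.map₂ (dualMul k A βe.symm.toLinearMap).flip
            (dualMul k A βe.symm.toLinearMap))
          (A.counit ⊗ₜ[k] A.counit)
          (TensorProduct.map (βe.symm.toLinearMap.dualMap) (βe.symm.toLinearMap.dualMap))
          ζMe.toLinearMap act ∧
        dualActCond k βe.symm.toLinearMap ζMe.symm.toLinearMap act ρl ρr) ∧
    (∀ (act : (Module.Dual k H) ⊗[k] (Module.Dual k H) →ₗ[k] M →ₗ[k] M)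
        (ρl ρl' : M →ₗ[k] H ⊗[k] M) (ρr ρr' : M →ₗ[k] M ⊗[k] H),
      IsLCom k A.toBialg ζMe.toLinearMap ρl → IsRCom k A.toBialg ζMe.toLinearMap ρr →
      IsLCom k A.toBialg ζMe.toLinearMap ρl' → IsRCom k A.toBialg ζMe.toLinearMap ρr' →
      dualActCond k βe.symm.toLinearMap ζMe.symm.toLinearMap act ρl ρr →
      dualActCond k βe.symm.toLinearMap ζMe.symm.toLinearMap act ρl' ρr' →
      ρl = ρl' ∧ ρr = ρr') ∧
    (∀ (act act' : (Module.Dual k H) ⊗[k] (Module.Dual k H) →ₗ[k] M →ₗ[k] M)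
        (ρl : M →ₗ[k] H ⊗[k] M) (ρr : M →ₗ[k] M ⊗[k] H),
      dualActCond k βe.symm.toLinearMap ζMe.symm.toLinearMap act ρl ρr →
      dualActCond k βe.symm.toLinearMap ζMe.symm.toLinearMap act' ρl ρr →
      act = act') := by
  refine ⟨?_, ?_, ?_, ?_⟩
  · intro act hmod
    exact dir1 A βe hβ ζMe act hmod
  · intro ρl ρr hl hr hbi
    obtain ⟨h1, h2⟩ := dir2 A βe hβ ζMe ρl ρr hl hr hbi
    exact ⟨actOf βe ζMe ρl ρr, h1, h2⟩
  · intro act ρl ρl' ρr ρr' hl hr hl' hr' hc hc'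
    exact part3 A βe hβ ζMe act ρl ρl' ρr ρr' hl hr hl' hr' hc hc'
  · intro act act' ρl ρr hc hc'
    exact part4 A βe hβ ζMe act act' ρl ρr hc hc'

end HomHopf
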